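/- Let (V_0, (.,.), A_0) be a Riemannian Einstein model with Einstein constant s, and let (V_1, <.,.>, A_1) be the complexified model with A_1 = Im(A_0^C) and <.,.> = Re((.,.)_C). Then A_1(rho_1 x, y, z, w) = A_1(x, y, z, rho_1 w) for all x,y,z,w in V_1, where rho_1 is the Ricci operator of A_1. Consequently the model (V_1, <.,.>, A_1) is Jacobi--Videv: rho_1 commutes with all Jacobi operators. -/

import Mathlib

noncomputable section

/-- The imaginary part of the complex multilinear extension of `A` to the
complexification, where `V × V` models `V ⊕ iV`. -/
def cxCurv {V : Type*} [AddCommGroup V] [Module ℝ V]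
    (A : V →ₗ[ℝ] V →ₗ[ℝ] V →ₗ[ℝ] V →ₗ[ℝ] ℝ) (u₁ u₂ u₃ u₄ : V × V) : ℝ :=
  (A u₁.2 u₂.1 u₃.1 u₄.1 + A u₁.1 u₂.2 u₃.1 u₄.1 + A u₁.1 u₂.1 u₃.2 u₄.1 +
      A u₁.1 u₂.1 u₃.1 u₄.2)
    - (A u₁.1 u₂.2 u₃.2 u₄.2 + A u₁.2 u₂.1 u₃.2 u₄.2 + A u₁.2 u₂.2 u₃.1 u₄.2 +
      A u₁.2 u₂.2 u₃.2 u₄.1)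

/-- The real part of the complex bilinear extension of the inner product;
a neutral signature inner product on `V × V`. -/
def cxForm {V : Type*} [AddCommGroup V] [Module ℝ V]
    (B : LinearMap.BilinForm ℝ V) (u v : V × V) : ℝ :=
  B u.1 v.1 - B u.2 v.2

/-- The Ricci tensor of `cxCurv A` computed with respect to the pseudo-orthonormal
basis `{(bₖ,0), (0,bₖ)}` of `V × V` (traces with signs). -/
def cxRicci {V : Type*} [AddCommGroup V] [Module ℝ V] {n : ℕ}
    (b : Module.Basis (Fin n) ℝ V)
    (A : V →ₗ[ℝ] V →ₗ[ℝ] V →ₗ[ℝ] V →ₗ[ℝ] ℝ) (u v : V × V) : ℝ :=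
  ∑ k, (cxCurv A u (b k, 0) (b k, 0) v - cxCurv A u (0, b k) (0, b k) v)


/-- For a Riemannian Einstein model with Einstein constant `s`,
the Ricci operator `rho₁` of the complexified model `(V × V, cxForm B, cxCurv A)`
satisfies `A₁(rho₁ x, y, z, w) = A₁(x, y, z, rho₁ w)` for all vectors; hence the
complexified model is Jacobi--Videv: `rho₁` commutes with every Jacobi operator. -/
theorem stmt_7 {V : Type*} [AddCommGroup V] [Module ℝ V] [FiniteDimensional ℝ V]
    {n : ℕ} (b : Module.Basis (Fin n) ℝ V)
    (B : LinearMap.BilinForm ℝ V) (hBsymm : ∀ x y, B x y = B y x)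
    (hBpos : ∀ x, x ≠ 0 → 0 < B x x)
    (hON : ∀ i j, B (b i) (b j) = if i = j then 1 else 0)
    (A : V →ₗ[ℝ] V →ₗ[ℝ] V →ₗ[ℝ] V →ₗ[ℝ] ℝ)
    (hpair : ∀ x y z w, A x y z w = A z w x y)
    (hanti : ∀ x y z w, A x y z w = -A y x z w)
    (hbianchi : ∀ x y z w, A x y z w + A y z x w + A z x y w = 0)
    (s : ℝ) (hEinstein : ∀ x y, (∑ k, A x (b k) (b k) y) = s * B x y)
    (rho1 : (V × V) →ₗ[ℝ] (V × V))
    (hrho1 : ∀ u v, cxForm B (rho1 u) v = cxRicci b A u v)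
    (Jop : (V × V) → (V × V) →ₗ[ℝ] (V × V))
    (hJop : ∀ ξ u v, cxForm B (Jop ξ u) v = cxCurv A u ξ ξ v) :
    (∀ x y z w : V × V, cxCurv A (rho1 x) y z w = cxCurv A x y z (rho1 w)) ∧
    (∀ ξ : V × V, rho1 ∘ₗ Jop ξ = Jop ξ ∘ₗ rho1) := by
  -- B is nondegenerate
  have hBnd : ∀ p q : V, (∀ w, B p w = B q w) → p = q := by
    intro p q h
    by_contra hne
    have h0 : B (p - q) (p - q) = 0 := by
      have h1 := h (p - q)
      simp only [map_sub, LinearMap.sub_apply] at h1 ⊢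
      linarith
    exact absurd h0 (ne_of_gt (hBpos _ (sub_ne_zero.mpr hne)))
  -- Ricci tensor computation
  have hric : ∀ u v : V × V,
      cxRicci b A u v = 2 * s * B u.2 v.1 + 2 * s * B u.1 v.2 := by
    intro u v
    have hk : ∀ k, cxCurv A u (b k, 0) (b k, 0) v - cxCurv A u (0, b k) (0, b k) v
        = 2 * A u.2 (b k) (b k) v.1 + 2 * A u.1 (b k) (b k) v.2 := by
      intro k
      simp only [cxCurv, map_zero, LinearMap.zero_apply]
      ring
    simp only [cxRicci]
    rw [Finset.sum_congr rfl (fun k _ => hk k), Finset.sum_add_distrib,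
      ← Finset.mul_sum, ← Finset.mul_sum, hEinstein, hEinstein]
    ring
  -- the Ricci operator formula
  have hrho : ∀ u : V × V, rho1 u = ((2 * s) • u.2, -((2 * s) • u.1)) := by
    intro u
    have e1 : (rho1 u).1 = (2 * s) • u.2 := by
      apply hBnd
      intro w
      have h := hrho1 u (w, 0)
      rw [hric] at h
      simp only [cxForm, map_zero, sub_zero, map_smul, LinearMap.smul_apply,
        smul_eq_mul] at h ⊢
      linarith
    have e2 : (rho1 u).2 = -((2 * s) • u.1) := by
      apply hBnd
      intro w
      have h := hrho1 u (0, w)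
      rw [hric] at h
      simp only [cxForm, map_zero, map_neg, map_smul, LinearMap.neg_apply,
        LinearMap.smul_apply, smul_eq_mul, zero_sub, neg_neg] at h ⊢
      linarith
    exact Prod.ext e1 e2
  -- part 1
  have part1 : ∀ x y z w : V × V,
      cxCurv A (rho1 x) y z w = cxCurv A x y z (rho1 w) := by
    intro x y z w
    rw [hrho x, hrho w]
    simp only [cxCurv, ← neg_smul, map_smul, map_neg, LinearMap.smul_apply, LinearMap.neg_apply,
      smul_eq_mul]
    ring
  refine ⟨part1, fun ξ => ?_⟩
  -- nondegeneracy of cxForm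
  have hnd2 : ∀ p q : V × V, (∀ v, cxForm B p v = cxForm B q v) → p = q := by
    intro p q h
    refine Prod.ext (hBnd _ _ fun w => ?_) (hBnd _ _ fun w => ?_)
    · have := h (w, 0)
      simp only [cxForm, map_zero, sub_zero] at this
      exact this
    · have := h (0, w)
      simp only [cxForm, map_zero, zero_sub, neg_inj] at this
      exact this
  apply LinearMap.ext
  intro u
  apply hnd2
  intro v
  have lhs : cxForm B (rho1 (Jop ξ u)) v = 2 * s * cxCurv A u ξ ξ (v.2, -v.1) := by
    rw [hrho (Jop ξ u)]
    have hj := hJop ξ u (v.2, -v.1)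
    simp only [cxForm, map_neg, map_smul, LinearMap.neg_apply, LinearMap.smul_apply,
      smul_eq_mul] at hj ⊢
    rw [← hj]; ring
  have rhs : cxForm B (Jop ξ (rho1 u)) v = 2 * s * cxCurv A u ξ ξ (v.2, -v.1) := by
    rw [hJop, part1, hrho v]
    simp only [cxCurv, map_smul, map_neg, LinearMap.smul_apply, LinearMap.neg_apply,
      smul_eq_mul]
    ring
  simp only [LinearMap.comp_apply]
  rw [lhs, rhs]
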